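/- Let Γ be a finite additive abelian group, S a multiset of elements of Γ with Cayley sum adjacency matrix A_S, and χ : Γ → ℂ an additive character that is not real-valued. Let α ∈ ℂ satisfy |α| = 1 and α² · χ(S) = |χ(S)|, and set x(v) = α·χ(v) for v ∈ Γ. Then A_S · x = |χ(S)| · conj(x), where conj(x) is the entrywise complex conjugate of x. -/

import Mathlib

/-- Let `χ` be a non-real-valued additive character of a finite additive
abelian group `Γ`, let `S` be a multiset of elements of `Γ` with Cayley sum adjacency
matrix `A_S(u,v) = m_S(u+v)`, and let `α ∈ ℂ` satisfy `|α| = 1` and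
`α² · χ(S) = |χ(S)|`.  Setting `x v = α · χ v`, we have `A_S · x = |χ(S)| · conj x`. -/
theorem cayley_sum_twisted_character
    {Γ : Type*} [AddCommGroup Γ] [Fintype Γ] [DecidableEq Γ]
    (S : Multiset Γ) (χ : Γ → ℂ)
    (hχ0 : χ 0 = 1) (hχadd : ∀ a b : Γ, χ (a + b) = χ a * χ b)
    (hnotreal : ¬ ∀ a : Γ, (χ a).im = 0)
    (α : ℂ) (hα : ‖α‖ = 1)
    (hα2 : α ^ 2 * (S.map χ).sum = (‖(S.map χ).sum‖ : ℂ)) :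
    (Matrix.of fun u v : Γ => (S.count (u + v) : ℂ)).mulVec (fun v => α * χ v)
      = fun u => (‖(S.map χ).sum‖ : ℂ) * (starRingEnd ℂ) (α * χ u) := by
  classical
  have hpow : ∀ (a : Γ) (n : ℕ), χ (n • a) = χ a ^ n := by
    intro a n
    induction n with
    | zero => simpa using hχ0
    | succ n ih => rw [succ_nsmul, hχadd, ih, pow_succ]
  have habs : ∀ a : Γ, ‖χ a‖ = 1 := by
    intro a
    have h1 : χ a ^ (Fintype.card Γ) = 1 := by
      rw [← hpow, card_nsmul_eq_zero, hχ0]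
    have h2 : ‖χ a‖ ^ (Fintype.card Γ) = 1 := by
      rw [← norm_pow, h1, norm_one]
    have hc : Fintype.card Γ ≠ 0 := Fintype.card_ne_zero
    have := norm_nonneg (χ a)
    rcases (pow_eq_one_iff_cases).mp h2 with h | h | h
    · exact absurd h hc
    · exact h
    · nlinarith [h.1]
  have hinv : ∀ a : Γ, χ (-a) * χ a = 1 := by
    intro a
    rw [← hχadd, neg_add_cancel, hχ0]
  have hconj : ∀ a : Γ, (starRingEnd ℂ) (χ a) = χ (-a) := by
    intro a
    have h1 : (starRingEnd ℂ) (χ a) * χ a = 1 := by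
      rw [Complex.conj_mul', habs]
      norm_num
    have hne : χ a ≠ 0 := by
      intro h
      rw [h, map_zero] at h1; norm_num at h1
    have h2 : χ a * χ (-a) = 1 := by rw [mul_comm]; exact hinv a
    calc (starRingEnd ℂ) (χ a) = (starRingEnd ℂ) (χ a) * (χ a * χ (-a)) := by
          rw [h2, mul_one]
      _ = ((starRingEnd ℂ) (χ a) * χ a) * χ (-a) := by ring
      _ = χ (-a) := by rw [h1, one_mul]
  have hαconj : (starRingEnd ℂ) α * α = 1 := by
    rw [Complex.conj_mul', hα]; norm_num
  -- α * χ(S) = conj α * |χ(S)|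
  have hkey : α * (S.map χ).sum = (starRingEnd ℂ) α * (‖(S.map χ).sum‖ : ℂ) := by
    calc α * (S.map χ).sum = (starRingEnd ℂ) α * (α ^ 2 * (S.map χ).sum) := by
          rw [pow_two]; rw [← mul_assoc, ← mul_assoc, hαconj, one_mul]
      _ = (starRingEnd ℂ) α * (‖(S.map χ).sum‖ : ℂ) := by rw [hα2]
  have hsum : ∑ w : Γ, (S.count w : ℂ) * χ w = (S.map χ).sum := by
    rw [Finset.sum_multiset_map_count]
    rw [← Finset.sum_subset (Finset.subset_univ S.toFinset)]
    · exact Finset.sum_congr rfl fun w _ => by rw [nsmul_eq_mul]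
    · intro w _ hw
      rw [Multiset.count_eq_zero_of_notMem (by simpa using hw)]
      simp
  funext u
  simp only [Matrix.mulVec, Matrix.of_apply, dotProduct]
  have reindex : ∑ v : Γ, (S.count (u + v) : ℂ) * (α * χ v)
      = α * χ (-u) * ∑ w : Γ, (S.count w : ℂ) * χ w := by
    rw [Finset.mul_sum]
    rw [← Equiv.sum_comp (Equiv.addLeft u) (fun w => α * χ (-u) * ((S.count w : ℂ) * χ w))]
    refine Finset.sum_congr rfl fun v _ => ?_
    have : χ v = χ (-u) * χ (u + v) := by
      rw [← hχadd]; congr 1; abel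
    simp only [Equiv.coe_addLeft]
    rw [this]; ring
  rw [reindex, hsum]
  rw [map_mul, hconj, mul_comm ((‖(S.map χ).sum‖ : ℂ))]
  rw [mul_comm α (χ (-u)), mul_assoc, hkey]
  ring
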